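/- Let 0 < a < b and let f₋, f₊ : (a,b) → ℝ be C² solutions of system (S) on (a,b). Then the Pohozaev identity holds pointwise on (a,b): d/dr [ r²(f₋'(r))² + r²(f₊'(r))² + r² f₊'(r) f₋'(r) − f₋(r)² − f₊(r)² − f₋(r) f₊(r) ] = r² · d/dr [ W(f₋(r), f₊(r)) ]. -/

import Mathlib

/-- The radial Laplacian `Δ_r u(r) = u''(r) + u'(r)/r`. -/
noncomputable def radLap (f : ℝ → ℝ) (r : ℝ) : ℝ := deriv (deriv f) r + deriv f r / r

/-- System (S): the equivariant isotropic p-wave Ginzburg–Landau system with degrees (-1, 1). -/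
def SystemS (fm fp : ℝ → ℝ) (r : ℝ) : Prop :=
  radLap fm r - fm r / r ^ 2 + (1 / 2) * (radLap fp r - fp r / r ^ 2)
      = fm r * (fm r ^ 2 - 1) + 2 * fm r * fp r ^ 2 ∧
  radLap fp r - fp r / r ^ 2 + (1 / 2) * (radLap fm r - fm r / r ^ 2)
      = fp r * (fp r ^ 2 - 1) + 2 * fp r * fm r ^ 2

/-- The normalized radial potential density `W(f₋,f₊) = ½(f₋²+f₊²−1)² + f₋²f₊²`. -/
noncomputable def Wpot (x y : ℝ) : ℝ := (1 / 2) * (x ^ 2 + y ^ 2 - 1) ^ 2 + x ^ 2 * y ^ 2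

theorem stmt4 (a b : ℝ) (ha : 0 < a) (hab : a < b) (fm fp : ℝ → ℝ)
    (hfm : ContDiffOn ℝ 2 fm (Set.Ioo a b)) (hfp : ContDiffOn ℝ 2 fp (Set.Ioo a b))
    (hS : ∀ r ∈ Set.Ioo a b, SystemS fm fp r) :
    ∀ r ∈ Set.Ioo a b,
      deriv (fun s => s ^ 2 * (deriv fm s) ^ 2 + s ^ 2 * (deriv fp s) ^ 2
          + s ^ 2 * deriv fp s * deriv fm s - fm s ^ 2 - fp s ^ 2 - fm s * fp s) r
        = r ^ 2 * deriv (fun s => Wpot (fm s) (fp s)) r := by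
  intro r hr
  have hnr : Set.Ioo a b ∈ nhds r := isOpen_Ioo.mem_nhds hr
  have hrne : r ≠ 0 := ne_of_gt (lt_trans ha hr.1)
  have hdm : ContDiffOn ℝ 1 (deriv fm) (Set.Ioo a b) :=
    hfm.deriv_of_isOpen (m := 1) isOpen_Ioo (by norm_num)
  have hdp : ContDiffOn ℝ 1 (deriv fp) (Set.Ioo a b) :=
    hfp.deriv_of_isOpen (m := 1) isOpen_Ioo (by norm_num)
  have hU : HasDerivAt fm (deriv fm r) r :=
    (((hfm.contDiffAt hnr).differentiableAt (by norm_num))).hasDerivAt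
  have hV : HasDerivAt fp (deriv fp r) r :=
    (((hfp.contDiffAt hnr).differentiableAt (by norm_num))).hasDerivAt
  have hU2 : HasDerivAt (deriv fm) (deriv (deriv fm) r) r :=
    (((hdm.contDiffAt hnr).differentiableAt (by norm_num))).hasDerivAt
  have hV2 : HasDerivAt (deriv fp) (deriv (deriv fp) r) r :=
    (((hdp.contDiffAt hnr).differentiableAt (by norm_num))).hasDerivAt
  have hid : HasDerivAt (fun s : ℝ => s ^ 2) (2 * r) r := by
    simpa using (hasDerivAt_pow 2 r)
  set u := fm r
  set v := fp r
  set u' := deriv fm r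
  set v' := deriv fp r
  set u'' := deriv (deriv fm) r
  set v'' := deriv (deriv fp) r
  have hL : HasDerivAt (fun s => s ^ 2 * (deriv fm s) ^ 2 + s ^ 2 * (deriv fp s) ^ 2
          + s ^ 2 * deriv fp s * deriv fm s - fm s ^ 2 - fp s ^ 2 - fm s * fp s)
      (((2*r) * u'^2 + r^2 * ((2:ℕ) * u'^1 * u'')
        + ((2*r) * v'^2 + r^2 * ((2:ℕ) * v'^1 * v''))
        + (((2*r) * v' + r^2 * v'') * u' + (r^2 * v') * u''))
        - (2:ℕ) * u^1 * u' - (2:ℕ) * v^1 * v' - (u' * v + u * v')) r := by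
    exact ((((hid.mul (hU2.pow 2)).add (hid.mul (hV2.pow 2))).add
      ((hid.mul hV2).mul hU2)).sub (hU.pow 2)).sub (hV.pow 2) |>.sub (hU.mul hV)
  have hWfun : (fun s => Wpot (fm s) (fp s))
      = fun s => (1/2) * ((fm s)^2 + (fp s)^2 - 1)^2 + (fm s)^2 * (fp s)^2 := by
    funext s; simp [Wpot]
  have hW : HasDerivAt (fun s => Wpot (fm s) (fp s))
      ((1/2) * ((2:ℕ) * (u^2 + v^2 - 1)^1 * ((2:ℕ)*u^1*u' + (2:ℕ)*v^1*v'))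
        + (((2:ℕ)*u^1*u') * v^2 + u^2 * ((2:ℕ)*v^1*v'))) r := by
    rw [hWfun]
    exact ((((hU.pow 2).add (hV.pow 2)).sub_const 1).pow 2).const_mul (1/2)
      |>.add ((hU.pow 2).mul (hV.pow 2))
  rw [hL.deriv, hW.deriv]
  obtain ⟨h1, h2⟩ := hS r hr
  simp only [radLap] at h1 h2
  push_cast
  linear_combination (norm := (field_simp; ring1)) (2 * r ^ 2 * u') * h1 + (2 * r ^ 2 * v') * h2
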